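/- Every topological space that is homogeneous, Lindelöf, locally Hausdorff, and a Baire space is Hausdorff. -/
import Mathlib

open Set Topology

theorem homogeneous_lindelof_locallyHausdorff_baire_t2
    {X : Type*} [TopologicalSpace X]
    (hhom : ∀ x y : X, ∃ h : X ≃ₜ X, h x = y)
    (hlin : LindelofSpace X)
    (hloc : ∀ x : X, ∃ U : Set X, IsOpen U ∧ x ∈ U ∧ T2Space U)
    (hbaire : BaireSpace X) :
    T2Space X := by
  constructor
  intro a b hab
  by_contra hsep'
  push_neg at hsep'
  have hsep : ∀ u v : Set X, IsOpen u → IsOpen v → a ∈ u → b ∈ v → ¬ Disjoint u v := hsep'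
  -- every point has an inseparable partner
  have key : ∀ x : X, ∃ y : X, y ≠ x ∧
      ∀ u v : Set X, IsOpen u → IsOpen v → x ∈ u → y ∈ v → ¬ Disjoint u v := by
    intro x
    obtain ⟨h, hha⟩ := hhom a x
    refine ⟨h b, ?_, ?_⟩
    · intro hbx
      exact hab (h.injective (hha.trans hbx.symm))
    · intro u v hu hv hxu hyv hd
      exact hsep (h ⁻¹' u) (h ⁻¹' v) (hu.preimage h.continuous)
        (hv.preimage h.continuous) (by simp [hha, hxu]) (by simpa using hyv)
        (hd.preimage _)
  choose U hUo hUx hUt2 using hloc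
  -- Lindelöf: countable subcover
  obtain ⟨r, hrc, hrcov⟩ := isLindelof_univ.elim_countable_subcover U hUo
    (fun x _ => mem_iUnion.2 ⟨x, hUx x⟩)
  -- separation inside a Hausdorff open set
  have hsepU : ∀ i : X, ∀ x ∈ U i, ∀ y ∈ U i, x ≠ y →
      ∃ u v : Set X, IsOpen u ∧ IsOpen v ∧ x ∈ u ∧ y ∈ v ∧ Disjoint u v := by
    intro i x hx y hy hxy
    haveI := hUt2 i
    obtain ⟨u, v, hu, hv, hxu, hyv, huv⟩ := t2_separation
      (show (⟨x, hx⟩ : U i) ≠ ⟨y, hy⟩ by simpa [Subtype.ext_iff] using hxy)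
    refine ⟨Subtype.val '' u, Subtype.val '' v,
      ((hUo i).isOpenEmbedding_subtypeVal.isOpenMap _ hu),
      ((hUo i).isOpenEmbedding_subtypeVal.isOpenMap _ hv),
      ⟨⟨x, hx⟩, hxu, rfl⟩, ⟨⟨y, hy⟩, hyv, rfl⟩, ?_⟩
    exact (Set.disjoint_image_iff Subtype.val_injective).2 huv
  set E : X → Set X := fun i => {x | x ∉ U i ∧ ∃ y ∈ U i,
    ∀ u v : Set X, IsOpen u → IsOpen v → x ∈ u → y ∈ v → ¬ Disjoint u v} with hE
  -- the E i, i ∈ r, cover X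
  have hcov : ∀ x : X, ∃ i ∈ r, x ∈ E i := by
    intro x
    obtain ⟨y, hyx, hy⟩ := key x
    have hyr : y ∈ ⋃ i ∈ r, U i := hrcov (mem_univ y)
    simp only [mem_iUnion] at hyr
    obtain ⟨i, hir, hyU⟩ := hyr
    refine ⟨i, hir, ?_, ⟨y, hyU, hy⟩⟩
    intro hxU
    obtain ⟨u, v, hu, hv, hxu, hyv, huv⟩ := hsepU i x hxU y hyU hyx.symm
    exact hy u v hu hv hxu hyv huv
  haveI : Nonempty X := ⟨a⟩
  haveI := hrc.to_subtype
  obtain ⟨i, z, hz⟩ := nonempty_interior_of_iUnion_of_closed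
    (f := fun i : r => closure (E ↑i)) (fun i => isClosed_closure)
    (by
      ext x
      simp only [mem_iUnion, mem_univ, iff_true]
      obtain ⟨i, hir, hx⟩ := hcov x
      exact ⟨⟨i, hir⟩, subset_closure hx⟩)
  set V := interior (closure (E (i : X))) with hV
  have hVopen : IsOpen V := isOpen_interior
  have hVE : ∀ W : Set X, IsOpen W → (W ∩ V).Nonempty → (W ∩ E (i : X)).Nonempty := by
    rintro W hW ⟨w, hwW, hwV⟩
    have hwcl : w ∈ closure (E (i : X)) := interior_subset hwV
    exact (mem_closure_iff.1 hwcl W hW hwW)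
  -- V and U i are disjoint
  have hVU : Disjoint V (U (i : X)) := by
    rw [Set.disjoint_left]
    intro w hwV hwU
    obtain ⟨w', hw'U, hw'E⟩ := hVE (U (i : X)) (hUo _) ⟨w, hwU, hwV⟩
    exact hw'E.1 hw'U
  -- V meets E i
  obtain ⟨x, hxV, hxE⟩ := hVE V hVopen ⟨z, hz, hz⟩
  obtain ⟨hxU, y, hyU, hins⟩ := hxE
  exact hins V (U (i : X)) hVopen (hUo _) hxV hyU hVU
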